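/- arXiv:1612.08652 — 6 statements merged into one kernel-verified Lean document; each statement's English description precedes it below -/
import Mathlib

section
/- The action D(u,r)·v(n) = ((u | n+α)v + (r'u)v)(n+r) makes F^α_b(V) = V ⊗ Aₙ into a module over the Witt algebra Wₙ; i.e., for all u,v ∈ ℂⁿ, r,s ∈ ℤⁿ, the operators satisfy [D(u,r), D(v,s)]·x = D((u|s)v − (v|r)u, r+s)·x for all x ∈ F^α_b(V). -/
/-- The outer product matrix r'u with (i,j) entry rᵢuⱼ. -/
def outerMat {n : ℕ} (u v : Fin n → ℂ) : Matrix (Fin n) (Fin n) ℂ :=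
  Matrix.of fun i j => u i * v j

/-- The Shen–Larsson operator D(u,r) on F^α_b(V) = V ⊗ ℂ[ℤⁿ], modeled as
    (Fin n → ℤ) →₀ V with v(m) = single m v:
    D(u,r)·v(m) = ((u|m+α)v + (r'u)v)(m+r). -/
noncomputable def ShenD {n : ℕ} {V : Type*} [AddCommGroup V] [Module ℂ V]
    (ρ : Matrix (Fin n) (Fin n) ℂ →ₗ[ℂ] Module.End ℂ V) (α : Fin n → ℂ)
    (u : Fin n → ℂ) (r : Fin n → ℤ) :
    ((Fin n → ℤ) →₀ V) →ₗ[ℂ] ((Fin n → ℤ) →₀ V) :=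
  Finsupp.lsum ℂ fun m =>
    (Finsupp.lsingle (m + r)).comp
      ((∑ i, u i * ((m i : ℂ) + α i)) • (LinearMap.id : V →ₗ[ℂ] V)
        + (ρ (outerMat (fun i => (r i : ℂ)) u) : V →ₗ[ℂ] V))

lemma ShenD_single {n : ℕ} {V : Type*} [AddCommGroup V] [Module ℂ V]
    (ρ : Matrix (Fin n) (Fin n) ℂ →ₗ[ℂ] Module.End ℂ V) (α : Fin n → ℂ)
    (u : Fin n → ℂ) (r : Fin n → ℤ) (m : Fin n → ℤ) (w : V) :
    ShenD ρ α u r (Finsupp.single m w)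
      = Finsupp.single (m + r)
          ((∑ i, u i * ((m i : ℂ) + α i)) • w + ρ (outerMat (fun i => (r i : ℂ)) u) w) := by
  simp [ShenD]

lemma key_mat {n : ℕ} (u v r s : Fin n → ℂ) :
    outerMat r u * outerMat s v - outerMat s v * outerMat r u
      + (∑ i, u i * s i) • outerMat s v - (∑ i, v i * r i) • outerMat r u
    = outerMat (r + s) ((∑ i, u i * s i) • v - (∑ i, v i * r i) • u) := by
  ext i j
  have h1 : ∑ k, (r i * u k) * (s k * v j) = (∑ k, u k * s k) * (r i * v j) := by
    rw [Finset.sum_mul]; exact Finset.sum_congr rfl fun k _ => by ring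
  have h2 : ∑ k, (s i * v k) * (r k * u j) = (∑ k, v k * r k) * (s i * u j) := by
    rw [Finset.sum_mul]; exact Finset.sum_congr rfl fun k _ => by ring
  simp [outerMat, Matrix.mul_apply, Matrix.sub_apply, Matrix.add_apply, Matrix.smul_apply,
    h1, h2, Pi.add_apply, Pi.sub_apply, Pi.smul_apply, smul_eq_mul]
  ring


/-- F^α_b(V) is a module over the Witt algebra: the operators D(u,r) satisfy
    [D(u,r), D(v,s)]·x = D((u|s)v − (v|r)u, r+s)·x. -/
theorem shen_larsson_is_module {n : ℕ} {V : Type*} [AddCommGroup V] [Module ℂ V]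
    (ρ : Matrix (Fin n) (Fin n) ℂ →ₗ[ℂ] Module.End ℂ V)
    (hρ : ∀ A B : Matrix (Fin n) (Fin n) ℂ, ρ (A * B - B * A) = ρ A * ρ B - ρ B * ρ A)
    (α : Fin n → ℂ) (b : ℂ) (hb : ρ 1 = b • 1)
    (u v : Fin n → ℂ) (r s : Fin n → ℤ) (x : (Fin n → ℤ) →₀ V) :
    (ShenD ρ α u r) ((ShenD ρ α v s) x) - (ShenD ρ α v s) ((ShenD ρ α u r) x)
      = ShenD ρ α ((∑ i, u i * (s i : ℂ)) • v - (∑ i, v i * (r i : ℂ)) • u) (r + s) x := by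
  induction x using Finsupp.induction_linear with
  | zero => simp
  | add f g hf hg => simp only [map_add]; rw [← hf, ← hg]; abel
  | single m w =>
    rw [ShenD_single, ShenD_single, ShenD_single, ShenD_single, ShenD_single]
    have hms : m + s + r = m + (r + s) := by abel
    have hmr : m + r + s = m + (r + s) := by abel
    rw [hms, hmr, ← Finsupp.single_sub]
    congr 1
    -- now an equality in V
    set M1 := outerMat (fun i => (r i : ℂ)) u with hM1
    set M2 := outerMat (fun i => (s i : ℂ)) v with hM2
    set a := ∑ i, u i * ((m i : ℂ) + α i) with ha
    set c := ∑ i, v i * ((m i : ℂ) + α i) with hc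
    set p := ∑ i, u i * (s i : ℂ) with hp
    set q := ∑ i, v i * (r i : ℂ) with hq
    have e1 : (∑ i, u i * (((m + s) i : ℂ) + α i)) = a + p := by
      rw [ha, hp, ← Finset.sum_add_distrib]
      exact Finset.sum_congr rfl fun i _ => by push_cast [Pi.add_apply]; ring
    have e2 : (∑ i, v i * (((m + r) i : ℂ) + α i)) = c + q := by
      rw [hc, hq, ← Finset.sum_add_distrib]
      exact Finset.sum_congr rfl fun i _ => by push_cast [Pi.add_apply]; ring
    have e3 : (∑ i, (p • v - q • u) i * ((m i : ℂ) + α i)) = p * c - q * a := by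
      rw [hc, ha, Finset.mul_sum, Finset.mul_sum, ← Finset.sum_sub_distrib]
      exact Finset.sum_congr rfl fun i _ => by simp [Pi.sub_apply, Pi.smul_apply]; ring
    have ecast : (fun i => (((r + s) i : ℤ) : ℂ)) = (fun i => (r i : ℂ)) + (fun i => (s i : ℂ)) := by
      funext i; push_cast [Pi.add_apply]; ring
    have emat : outerMat (fun i => (((r + s) i : ℤ) : ℂ)) (p • v - q • u)
        = M1 * M2 - M2 * M1 + p • M2 - q • M1 := by
      rw [ecast, hM1, hM2, hp, hq, key_mat]
    have hcomm : ρ M1 (ρ M2 w) - ρ M2 (ρ M1 w) = ρ (M1 * M2) w - ρ (M2 * M1) w := by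
      rw [← LinearMap.sub_apply, ← map_sub, hρ]; rfl
    rw [e1, e2, e3, emat]
    simp only [map_add, map_sub, map_smul, LinearMap.add_apply, LinearMap.sub_apply,
      LinearMap.smul_apply, smul_add, add_smul, sub_smul, smul_smul]
    rw [← hcomm]
    module
end

section
/- The span of the operators Ē_{ij} = tᵢtⱼ^{-1}∂ⱼ (1≤i,j≤n), Ē_{i,n+1} = −tᵢΣⱼ∂ⱼ, Ē_{n+1,i} = tᵢ^{-1}∂ᵢ, Ē_{n+1,n+1} = −Σⱼ∂ⱼ inside the Witt algebra Wₙ satisfies the gl_{n+1} commutation relations [Ē_{ab}, Ē_{cd}] = δ_{bc}Ē_{ad} − δ_{da}Ē_{cb} for all 1 ≤ a,b,c,d ≤ n+1. -/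
/- A_n = ℂ[t₁^{±1},…,tₙ^{±1}] modeled as (Fin n → ℤ) →₀ ℂ with t^m = single m 1. -/

/-- The derivation D(u,r) = t^r Σᵢ uᵢ tᵢ ∂/∂tᵢ. -/
noncomputable def LaurentD {n : ℕ} (u : Fin n → ℂ) (r : Fin n → ℤ) :
    ((Fin n → ℤ) →₀ ℂ) →ₗ[ℂ] ((Fin n → ℤ) →₀ ℂ) :=
  Finsupp.lsum ℂ fun m => (∑ i, u i * (m i : ℂ)) • Finsupp.lsingle (m + r)

/-- χ(a) = e_a for a ≤ n, and 0 for a = n+1 (indices taken in Fin (n+1)). -/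
def chiVec (n : ℕ) (a : Fin (n + 1)) : Fin n → ℤ :=
  fun k => if (a : ℕ) = (k : ℕ) then 1 else 0

/-- u(b) = e_b for b ≤ n, and −(1,…,1) for b = n+1. -/
def uVec (n : ℕ) (b : Fin (n + 1)) : Fin n → ℂ :=
  fun k => if (b : ℕ) = n then -1 else if (b : ℕ) = (k : ℕ) then 1 else 0

/-- The vector fields Ē_{ab} inside the Witt algebra:
    Ē_{ij} = tᵢtⱼ⁻¹∂ⱼ, Ē_{i,n+1} = −tᵢΣⱼ∂ⱼ, Ē_{n+1,i} = tᵢ⁻¹∂ᵢ, Ē_{n+1,n+1} = −Σⱼ∂ⱼ. -/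
noncomputable def Ebar (n : ℕ) (a b : Fin (n + 1)) :
    ((Fin n → ℤ) →₀ ℂ) →ₗ[ℂ] ((Fin n → ℤ) →₀ ℂ) :=
  LaurentD (uVec n b) (chiVec n a - chiVec n b)

lemma LaurentD_single {n : ℕ} (u : Fin n → ℂ) (r : Fin n → ℤ) (m : Fin n → ℤ) (x : ℂ) :
    LaurentD u r (Finsupp.single m x) = (∑ i, u i * (m i : ℂ)) • Finsupp.single (m + r) x := by
  simp [LaurentD]

lemma LaurentD_comm {n : ℕ} (u v : Fin n → ℂ) (r s : Fin n → ℤ) :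
    LaurentD u r ∘ₗ LaurentD v s - LaurentD v s ∘ₗ LaurentD u r
      = LaurentD ((∑ i, u i * (s i : ℂ)) • v - (∑ i, v i * (r i : ℂ)) • u) (s + r) := by
  apply Finsupp.lhom_ext
  intro m x
  simp only [LinearMap.sub_apply, LinearMap.comp_apply, LaurentD_single, map_smul,
    Finsupp.smul_single, smul_eq_mul]
  rw [show m + s + r = m + (s + r) by abel, show m + r + s = m + (s + r) by abel,
    ← Finsupp.single_sub]
  congr 1
  simp only [Pi.add_apply, Pi.sub_apply, Pi.smul_apply, smul_eq_mul, Int.cast_add,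
    mul_add, sub_mul, Finset.sum_add_distrib, Finset.sum_sub_distrib, mul_assoc, ← Finset.mul_sum]
  ring

lemma LaurentD_zero_u {n : ℕ} (r : Fin n → ℤ) : LaurentD (0 : Fin n → ℂ) r = 0 := by
  apply Finsupp.lhom_ext
  intro m x
  simp [LaurentD_single]

lemma LaurentD_smul_u {n : ℕ} (c : ℂ) (u : Fin n → ℂ) (r : Fin n → ℤ) :
    LaurentD (c • u) r = c • LaurentD u r := by
  apply Finsupp.lhom_ext
  intro m x
  simp only [LaurentD_single, LinearMap.smul_apply, smul_smul]
  congr 1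
  simp [Finset.mul_sum, mul_assoc]

lemma LaurentD_sub_u {n : ℕ} (u v : Fin n → ℂ) (r : Fin n → ℤ) :
    LaurentD (u - v) r = LaurentD u r - LaurentD v r := by
  apply Finsupp.lhom_ext
  intro m x
  simp [LaurentD_single, sub_mul, Finset.sum_sub_distrib, sub_smul]

lemma dot1 (n : ℕ) (b c : Fin (n + 1)) :
    ∑ i, uVec n b i * ((chiVec n c i : ℤ) : ℂ)
      = (if b = c then 1 else 0) - (if (b : ℕ) = n then 1 else 0) := by
  by_cases hc : (c : ℕ) = n
  · have h0 : ∀ i : Fin n, chiVec n c i = 0 := by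
      intro i
      simp [chiVec, hc, i.isLt.ne']
    by_cases hb : (b : ℕ) = n
    · have : b = c := Fin.ext (hb.trans hc.symm)
      simp [h0, this, hc]
    · have : b ≠ c := fun h => hb (h ▸ hc)
      simp [h0, this, hb]
  · have hlt : (c : ℕ) < n := lt_of_le_of_ne (Nat.lt_succ_iff.mp c.isLt) hc
    have hsum : (∑ i, uVec n b i * ((chiVec n c i : ℤ) : ℂ)) = uVec n b ⟨(c : ℕ), hlt⟩ := by
      rw [Finset.sum_eq_single (⟨(c : ℕ), hlt⟩ : Fin n)
        (fun i _ hi => by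
          have h : ¬ ((c : ℕ) = (i : ℕ)) := fun h => hi (Fin.ext h.symm)
          simp [chiVec, h])
        (by simp)]
      simp [chiVec]
    rw [hsum]
    simp only [uVec, Fin.ext_iff]
    by_cases hb : (b : ℕ) = n
    · have h2 : ¬ ((b : ℕ) = (c : ℕ)) := by omega
      have h3 : ¬ (n = (c : ℕ)) := by omega
      simp [hb, h2, h3]
    · simp [hb]

lemma dotsum (n : ℕ) (b c d : Fin (n + 1)) :
    ∑ i, uVec n b i * (((chiVec n c - chiVec n d) i : ℤ) : ℂ)
      = (if b = c then 1 else 0) - (if b = d then 1 else 0) := by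
  simp only [Pi.sub_apply, Int.cast_sub, mul_sub, Finset.sum_sub_distrib, dot1]
  ring

/-- The gl_{n+1} commutation relations
    [Ē_{ab}, Ē_{cd}] = δ_{bc}Ē_{ad} − δ_{da}Ē_{cb}. -/
theorem Ebar_gl_relations (n : ℕ) (a b c d : Fin (n + 1)) :
    Ebar n a b ∘ₗ Ebar n c d - Ebar n c d ∘ₗ Ebar n a b
      = (if b = c then (1 : ℂ) else 0) • Ebar n a d
        - (if d = a then (1 : ℂ) else 0) • Ebar n c b := by
  rw [Ebar, Ebar, Ebar, Ebar, LaurentD_comm, dotsum, dotsum]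
  have hW : ((if b = c then (1:ℂ) else 0) - (if b = d then 1 else 0)) • uVec n d
      - ((if d = a then (1:ℂ) else 0) - (if d = b then 1 else 0)) • uVec n b
      = (if b = c then (1:ℂ) else 0) • uVec n d - (if d = a then (1:ℂ) else 0) • uVec n b := by
    by_cases h : b = d
    · subst h
      simp [sub_smul]
    · simp [h, Ne.symm h]
  rw [hW, LaurentD_sub_u]
  congr 1
  · by_cases hbc : b = c
    · subst hbc
      rw [if_pos rfl, one_smul, one_smul]
      congr 1
      abel
    · simp [hbc, LaurentD_zero_u]
  · by_cases hda : d = a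
    · subst hda
      rw [if_pos rfl, one_smul, one_smul]
      congr 1
      abel
    · simp [hda, LaurentD_zero_u]
end

section
/- If c ± λ ∉ ℤ, then the gl₂-module V with basis {vᵢ : i ∈ ℤ} and action E₁₁vᵢ = (b+λ+i)vᵢ, E₂₂vᵢ = (b−λ−i)vᵢ, E₁₂vᵢ = (c+λ+i)v_{i+1}, E₂₁vᵢ = (c−λ−i)v_{i−1} is an irreducible gl₂-module. -/
/- V = span{vᵢ : i ∈ ℤ} modeled as ℤ →₀ ℂ with vᵢ = single i 1. -/

noncomputable def E11 (lam b : ℂ) : (ℤ →₀ ℂ) →ₗ[ℂ] (ℤ →₀ ℂ) :=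
  Finsupp.lsum ℂ fun i => (b + lam + (i : ℂ)) • Finsupp.lsingle i

noncomputable def E22 (lam b : ℂ) : (ℤ →₀ ℂ) →ₗ[ℂ] (ℤ →₀ ℂ) :=
  Finsupp.lsum ℂ fun i => (b - lam - (i : ℂ)) • Finsupp.lsingle i

noncomputable def E12 (lam c : ℂ) : (ℤ →₀ ℂ) →ₗ[ℂ] (ℤ →₀ ℂ) :=
  Finsupp.lsum ℂ fun i => (c + lam + (i : ℂ)) • Finsupp.lsingle (i + 1)

noncomputable def E21 (lam c : ℂ) : (ℤ →₀ ℂ) →ₗ[ℂ] (ℤ →₀ ℂ) :=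
  Finsupp.lsum ℂ fun i => (c - lam - (i : ℂ)) • Finsupp.lsingle (i - 1)

lemma E11_single' (lam b : ℂ) (i : ℤ) (a : ℂ) :
    E11 lam b (Finsupp.single i a) = (b + lam + i) • Finsupp.single i a := by
  simp only [E11, Finsupp.lsum_single, LinearMap.smul_apply, Finsupp.lsingle_apply]

lemma E12_single' (lam c : ℂ) (i : ℤ) (a : ℂ) :
    E12 lam c (Finsupp.single i a) = (c + lam + i) • Finsupp.single (i + 1) a := by
  simp only [E12, Finsupp.lsum_single, LinearMap.smul_apply, Finsupp.lsingle_apply]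

lemma E21_single' (lam c : ℂ) (i : ℤ) (a : ℂ) :
    E21 lam c (Finsupp.single i a) = (c - lam - i) • Finsupp.single (i - 1) a := by
  simp only [E21, Finsupp.lsum_single, LinearMap.smul_apply, Finsupp.lsingle_apply]

lemma E11_apply' (lam b : ℂ) (w : ℤ →₀ ℂ) (j : ℤ) :
    (E11 lam b w) j = (b + lam + j) * w j := by
  induction w using Finsupp.induction_linear with
  | zero => simp
  | add f g hf hg => simp only [map_add, Finsupp.add_apply, hf, hg]; ring
  | single i a =>
    rw [E11_single']
    simp only [Finsupp.smul_apply, Finsupp.single_apply, smul_eq_mul]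
    rcases eq_or_ne i j with h | h <;> simp [h]

/-- Component extraction: a submodule invariant under E₁₁ contains each
    "coordinate piece" of each of its elements. -/
lemma comp_mem (lam b : ℂ) (W : Submodule ℂ (ℤ →₀ ℂ))
    (hW11 : ∀ x ∈ W, E11 lam b x ∈ W) :
    ∀ n (w : ℤ →₀ ℂ), w.support.card = n → w ∈ W → ∀ i, Finsupp.single i (w i) ∈ W := by
  intro n
  induction n using Nat.strong_induction_on with
  | _ n IH =>
    intro w hcard hw i
    rcases eq_or_ne (w i) 0 with h0 | h0
    · rw [h0, Finsupp.single_zero]; exact W.zero_mem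
    by_cases hsub : w.support ⊆ {i}
    · have : w = Finsupp.single i (w i) := by
        ext j
        rcases eq_or_ne j i with rfl | hj
        · rw [Finsupp.single_eq_same]
        · rw [Finsupp.single_apply, if_neg (Ne.symm hj)]
          by_contra hc
          exact hj (Finset.mem_singleton.mp (hsub (Finsupp.mem_support_iff.mpr hc)))
      rw [← this]; exact hw
    · obtain ⟨j, hjsupp, hji⟩ := Finset.not_subset.mp hsub
      have hji' : j ≠ i := by simpa using hji
      set w' : ℤ →₀ ℂ := E11 lam b w - (b + lam + j) • w with hw'def
      have hw'mem : w' ∈ W := W.sub_mem (hW11 w hw) (W.smul_mem _ hw)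
      have hw'app : ∀ k : ℤ, w' k = ((k : ℂ) - j) * w k := by
        intro k
        simp only [hw'def, Finsupp.sub_apply, Finsupp.smul_apply, smul_eq_mul,
          E11_apply']
        ring
      have hcast : ∀ k : ℤ, ((k : ℂ) - (j : ℂ) = 0) ↔ k = j := by
        intro k
        rw [sub_eq_zero, Int.cast_inj]
      have hsupp : w'.support = w.support.erase j := by
        ext k
        simp only [Finsupp.mem_support_iff, Finset.mem_erase, hw'app, mul_ne_zero_iff]
        constructor
        · rintro ⟨hk1, hk2⟩
          exact ⟨fun h => hk1 (by rw [h, sub_self]), hk2⟩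
        · rintro ⟨hk1, hk2⟩
          exact ⟨fun h => hk1 ((hcast k).mp h), hk2⟩
      have hlt : w'.support.card < n := by
        rw [hsupp, ← hcard]
        exact Finset.card_erase_lt_of_mem hjsupp
      have hkey := IH _ hlt w' rfl hw'mem i
      rw [hw'app i] at hkey
      have hne : ((i : ℂ) - j) ≠ 0 := fun h => hji' ((hcast i).mp h).symm
      have : Finsupp.single i (w i) = ((i : ℂ) - j)⁻¹ • Finsupp.single i (((i : ℂ) - j) * w i) := by
        rw [Finsupp.smul_single', ← mul_assoc, inv_mul_cancel₀ hne, one_mul]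
      rw [this]
      exact W.smul_mem _ hkey

/-- If c ± λ ∉ ℤ then the gl₂-module V is irreducible: every submodule
    invariant under E₁₁, E₂₂, E₁₂, E₂₁ is 0 or all of V. -/
theorem gl2_module_irreducible (lam b c : ℂ)
    (h1 : ∀ m : ℤ, c + lam ≠ (m : ℂ)) (h2 : ∀ m : ℤ, c - lam ≠ (m : ℂ))
    (W : Submodule ℂ (ℤ →₀ ℂ))
    (hW11 : ∀ x ∈ W, E11 lam b x ∈ W) (hW22 : ∀ x ∈ W, E22 lam b x ∈ W)
    (hW12 : ∀ x ∈ W, E12 lam c x ∈ W) (hW21 : ∀ x ∈ W, E21 lam c x ∈ W)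
    (hW : W ≠ ⊥) : W = ⊤ := by
  -- get a single basis vector in W
  obtain ⟨w, hwW, hw0⟩ := Submodule.exists_mem_ne_zero_of_ne_bot hW
  obtain ⟨i₀, hi₀⟩ : ∃ i, w i ≠ 0 := by
    by_contra h
    push_neg at h
    exact hw0 (Finsupp.ext h)
  have hsing : Finsupp.single i₀ (w i₀) ∈ W :=
    comp_mem lam b W hW11 _ w rfl hwW i₀
  have hv0 : Finsupp.single i₀ (1 : ℂ) ∈ W := by
    have : Finsupp.single i₀ (1 : ℂ) = (w i₀)⁻¹ • Finsupp.single i₀ (w i₀) := by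
      rw [Finsupp.smul_single', inv_mul_cancel₀ hi₀]
    rw [this]
    exact W.smul_mem _ hsing
  -- move up and down
  have hup : ∀ j : ℤ, Finsupp.single j (1 : ℂ) ∈ W → Finsupp.single (j + 1) (1 : ℂ) ∈ W := by
    intro j hj
    have hne : (c + lam + (j : ℂ)) ≠ 0 := by
      intro h
      exact h1 (-j) (by push_cast; linear_combination h)
    have := hW12 _ hj
    rw [E12_single'] at this
    have heq : Finsupp.single (j + 1) (1 : ℂ)
        = (c + lam + (j : ℂ))⁻¹ • ((c + lam + (j : ℂ)) • Finsupp.single (j + 1) (1 : ℂ)) := by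
      rw [smul_smul, inv_mul_cancel₀ hne, one_smul]
    rw [heq]
    exact W.smul_mem _ this
  have hdown : ∀ j : ℤ, Finsupp.single j (1 : ℂ) ∈ W → Finsupp.single (j - 1) (1 : ℂ) ∈ W := by
    intro j hj
    have hne : (c - lam - (j : ℂ)) ≠ 0 := by
      intro h
      exact h2 j (by linear_combination h)
    have := hW21 _ hj
    rw [E21_single'] at this
    have heq : Finsupp.single (j - 1) (1 : ℂ)
        = (c - lam - (j : ℂ))⁻¹ • ((c - lam - (j : ℂ)) • Finsupp.single (j - 1) (1 : ℂ)) := by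
      rw [smul_smul, inv_mul_cancel₀ hne, one_smul]
    rw [heq]
    exact W.smul_mem _ this
  have hall : ∀ j : ℤ, Finsupp.single j (1 : ℂ) ∈ W := by
    have hQ : ∀ k : ℤ, Finsupp.single (i₀ + k) (1 : ℂ) ∈ W := by
      intro k
      induction k using Int.induction_on with
      | zero => simpa using hv0
      | succ k ih => have := hup _ ih; rwa [add_assoc] at this
      | pred k ih =>
        have := hdown _ ih
        have heq : i₀ + (-(k : ℤ)) - 1 = i₀ + (-(k : ℤ) - 1) := by ring
        rwa [heq] at this
    intro j
    have := hQ (j - i₀)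
    rwa [add_sub_cancel] at this
  -- conclude
  rw [eq_top_iff]
  intro x _
  induction x using Finsupp.induction_linear with
  | zero => exact W.zero_mem
  | add f g hf hg => exact W.add_mem (hf trivial) (hg trivial)
  | single j a =>
    have : Finsupp.single j a = a • Finsupp.single j (1 : ℂ) := by
      rw [Finsupp.smul_single', mul_one]
    rw [this]
    exact W.smul_mem _ (hall j)
end

section
/- Let λ,b,c,α₁,α₂ ∈ ℂ satisfy: c±λ, α₁−b−λ, α₂−b+λ, α₁+2b, α₂+2b, α₁+α₂+b±c ∉ ℤ. Then the sl₃-module F^α_{2b}(V) is generated by any single basis vector vᵢ(r₁,r₂), i.e., the submodule generated by vᵢ(r₁,r₂) is all of F^α_{2b}(V). -/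
set_option linter.unusedVariables false
/- F^α_{2b}(V) modeled as (ℤ × ℤ × ℤ) →₀ ℂ with basis vᵢ(r₁,r₂) = single (i,r₁,r₂) 1,
   carrying the sl₃-action of formulas (3.2): parameters α₁, α₂, λ (written lam), b, c. -/

abbrev F3 := (ℤ × ℤ × ℤ) →₀ ℂ

/-- The basis vector vᵢ(r₁,r₂). -/
noncomputable def vb (i r₁ r₂ : ℤ) : F3 := Finsupp.single (i, r₁, r₂) 1

noncomputable def Eb11 (α₁ α₂ lam b c : ℂ) : F3 →ₗ[ℂ] F3 :=
  Finsupp.lsum ℂ fun p => ((p.2.1 : ℂ) + α₁) • Finsupp.lsingle p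

noncomputable def Eb22 (α₁ α₂ lam b c : ℂ) : F3 →ₗ[ℂ] F3 :=
  Finsupp.lsum ℂ fun p => ((p.2.2 : ℂ) + α₂) • Finsupp.lsingle p

noncomputable def Eb33 (α₁ α₂ lam b c : ℂ) : F3 →ₗ[ℂ] F3 :=
  Finsupp.lsum ℂ fun p => (-((p.2.1 : ℂ) + α₁ + (p.2.2 : ℂ) + α₂)) • Finsupp.lsingle p

noncomputable def Eb12 (α₁ α₂ lam b c : ℂ) : F3 →ₗ[ℂ] F3 :=
  Finsupp.lsum ℂ fun p =>
    (lam + (p.1 : ℂ) - b + (p.2.2 : ℂ) + α₂) • Finsupp.lsingle (p.1, p.2.1 + 1, p.2.2 - 1)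
      + (c + lam + (p.1 : ℂ)) • Finsupp.lsingle (p.1 + 1, p.2.1 + 1, p.2.2 - 1)

noncomputable def Eb21 (α₁ α₂ lam b c : ℂ) : F3 →ₗ[ℂ] F3 :=
  Finsupp.lsum ℂ fun p =>
    (c - lam - (p.1 : ℂ)) • Finsupp.lsingle (p.1 - 1, p.2.1 - 1, p.2.2 + 1)
      + (-(lam + (p.1 : ℂ)) - b + (p.2.1 : ℂ) + α₁) • Finsupp.lsingle (p.1, p.2.1 - 1, p.2.2 + 1)

noncomputable def Eb13 (α₁ α₂ lam b c : ℂ) : F3 →ₗ[ℂ] F3 :=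
  Finsupp.lsum ℂ fun p =>
    -(((p.2.1 : ℂ) + α₁ + (p.2.2 : ℂ) + α₂ + b + lam + (p.1 : ℂ)) • Finsupp.lsingle (p.1, p.2.1 + 1, p.2.2)
      + (c + lam + (p.1 : ℂ)) • Finsupp.lsingle (p.1 + 1, p.2.1 + 1, p.2.2))

noncomputable def Eb31 (α₁ α₂ lam b c : ℂ) : F3 →ₗ[ℂ] F3 :=
  Finsupp.lsum ℂ fun p =>
    ((p.2.1 : ℂ) + α₁ - b - lam - (p.1 : ℂ)) • Finsupp.lsingle (p.1, p.2.1 - 1, p.2.2)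

noncomputable def Eb23 (α₁ α₂ lam b c : ℂ) : F3 →ₗ[ℂ] F3 :=
  Finsupp.lsum ℂ fun p =>
    -((c - lam - (p.1 : ℂ)) • Finsupp.lsingle (p.1 - 1, p.2.1, p.2.2 + 1)
      + ((p.2.1 : ℂ) + α₁ + (p.2.2 : ℂ) + α₂ + b - lam - (p.1 : ℂ)) • Finsupp.lsingle (p.1, p.2.1, p.2.2 + 1))

noncomputable def Eb32 (α₁ α₂ lam b c : ℂ) : F3 →ₗ[ℂ] F3 :=
  Finsupp.lsum ℂ fun p =>
    ((p.2.2 : ℂ) + α₂ - b + lam + (p.1 : ℂ)) • Finsupp.lsingle (p.1, p.2.1, p.2.2 - 1)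


section Formulas
variable (α₁ α₂ lam b c : ℂ)

lemma Eb31_vb (j s₁ s₂ : ℤ) :
    Eb31 α₁ α₂ lam b c (vb j s₁ s₂) = (((s₁:ℂ)) + α₁ - b - lam - j) • vb j (s₁-1) s₂ := by
  simp [Eb31, vb, Finsupp.lsum_single]

lemma Eb32_vb (j s₁ s₂ : ℤ) :
    Eb32 α₁ α₂ lam b c (vb j s₁ s₂) = (((s₂:ℂ)) + α₂ - b + lam + j) • vb j s₁ (s₂-1) := by
  simp [Eb32, vb, Finsupp.lsum_single]

lemma Eb21_vb (j s₁ s₂ : ℤ) :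
    Eb21 α₁ α₂ lam b c (vb j s₁ s₂) =
      (c - lam - (j:ℂ)) • vb (j-1) (s₁-1) (s₂+1)
        + (-(lam + (j:ℂ)) - b + s₁ + α₁) • vb j (s₁-1) (s₂+1) := by
  simp [Eb21, vb, Finsupp.lsum_single]

lemma Eb12_vb (j s₁ s₂ : ℤ) :
    Eb12 α₁ α₂ lam b c (vb j s₁ s₂) =
      (lam + (j:ℂ) - b + s₂ + α₂) • vb j (s₁+1) (s₂-1)
        + (c + lam + (j:ℂ)) • vb (j+1) (s₁+1) (s₂-1) := by
  simp [Eb12, vb, Finsupp.lsum_single]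

lemma Eb13_vb (j s₁ s₂ : ℤ) :
    Eb13 α₁ α₂ lam b c (vb j s₁ s₂) =
      -(((s₁:ℂ) + α₁ + s₂ + α₂ + b + lam + j) • vb j (s₁+1) s₂
        + (c + lam + (j:ℂ)) • vb (j+1) (s₁+1) s₂) := by
  simp [Eb13, vb, Finsupp.lsum_single]

lemma Eb23_vb (j s₁ s₂ : ℤ) :
    Eb23 α₁ α₂ lam b c (vb j s₁ s₂) =
      -((c - lam - (j:ℂ)) • vb (j-1) s₁ (s₂+1)
        + ((s₁:ℂ) + α₁ + s₂ + α₂ + b - lam - (j:ℂ)) • vb j s₁ (s₂+1)) := by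
  simp [Eb23, vb, Finsupp.lsum_single]

end Formulas

/-- An integer-shift induction principle. -/
lemma int_shift (f : ℤ → Prop) (hup : ∀ a, f a → f (a+1)) (hdn : ∀ a, f a → f (a-1))
    (a : ℤ) (ha : f a) : ∀ t, f t := by
  intro t
  have key : ∀ n : ℤ, f (a + n) := by
    intro n
    induction n using Int.induction_on with
    | zero => simpa using ha
    | succ k ih => rw [show a + ((k:ℤ)+1) = (a + k) + 1 by ring]; exact hup _ ih
    | pred k ih => rw [show a + (-(k:ℤ)-1) = (a + -(k:ℤ)) - 1 by ring]; exact hdn _ ih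
  have := key (t - a)
  rwa [show a + (t - a) = t by ring] at this

/-- Under the genericity conditions of Lemma 2.2, the sl₃-module F^α_{2b}(V) is generated
    by any single basis vector vᵢ(r₁,r₂): any sl₃-invariant subspace containing vᵢ(r₁,r₂)
    is everything. -/
theorem generated_by_any_basis_vector (α₁ α₂ lam b c : ℂ)
    (h1 : ∀ m : ℤ, c + lam ≠ (m : ℂ)) (h2 : ∀ m : ℤ, c - lam ≠ (m : ℂ))
    (h3 : ∀ m : ℤ, α₁ - b - lam ≠ (m : ℂ)) (h4 : ∀ m : ℤ, α₂ - b + lam ≠ (m : ℂ))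
    (h5 : ∀ m : ℤ, α₁ + 2 * b ≠ (m : ℂ)) (h6 : ∀ m : ℤ, α₂ + 2 * b ≠ (m : ℂ))
    (h7 : ∀ m : ℤ, α₁ + α₂ + b + c ≠ (m : ℂ)) (h8 : ∀ m : ℤ, α₁ + α₂ + b - c ≠ (m : ℂ))
    (i r₁ r₂ : ℤ) (W : Submodule ℂ F3)
    (hW11 : ∀ x ∈ W, Eb11 α₁ α₂ lam b c x ∈ W) (hW22 : ∀ x ∈ W, Eb22 α₁ α₂ lam b c x ∈ W)
    (hW33 : ∀ x ∈ W, Eb33 α₁ α₂ lam b c x ∈ W) (hW12 : ∀ x ∈ W, Eb12 α₁ α₂ lam b c x ∈ W)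
    (hW21 : ∀ x ∈ W, Eb21 α₁ α₂ lam b c x ∈ W) (hW13 : ∀ x ∈ W, Eb13 α₁ α₂ lam b c x ∈ W)
    (hW31 : ∀ x ∈ W, Eb31 α₁ α₂ lam b c x ∈ W) (hW23 : ∀ x ∈ W, Eb23 α₁ α₂ lam b c x ∈ W)
    (hW32 : ∀ x ∈ W, Eb32 α₁ α₂ lam b c x ∈ W)
    (hv : vb i r₁ r₂ ∈ W) : W = ⊤  := by
  have e1 : ∀ a : ℤ, a - 1 + 1 = a := fun a => by ring
  have e2 : ∀ a : ℤ, a + 1 - 1 = a := fun a => by ring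
  -- nonvanishing helpers
  have hcp : ∀ m : ℤ, c + lam + (m:ℂ) ≠ 0 := by
    intro m h; exact h1 (-m) (by push_cast; linear_combination h)
  have hcm : ∀ m : ℤ, c - lam - (m:ℂ) ≠ 0 := by
    intro m h; exact h2 m (by linear_combination h)
  have hK : ∀ k m : ℤ, (k:ℂ) + α₁ - b - lam - (m:ℂ) ≠ 0 := by
    intro k m h; exact h3 (m - k) (by push_cast; linear_combination h)
  have hP : ∀ k m : ℤ, (k:ℂ) + α₂ - b + lam + (m:ℂ) ≠ 0 := by
    intro k m h; exact h4 (-m - k) (by push_cast; linear_combination h)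
  have hG1 : ∀ k : ℤ, (k:ℂ) + α₁ + 2*b - 1 ≠ 0 := by
    intro k h; exact h5 (1 - k) (by push_cast; linear_combination h)
  have hG2 : ∀ k : ℤ, (k:ℂ) + α₂ + 2*b - 1 ≠ 0 := by
    intro k h; exact h6 (1 - k) (by push_cast; linear_combination h)
  have hS1 : ∀ k m : ℤ, c + ((k:ℂ) + (m:ℂ) + α₁ + α₂ + b) - 1 ≠ 0 := by
    intro k m h; exact h7 (1 - k - m) (by push_cast; linear_combination h)
  have hS2 : ∀ k m : ℤ, c - ((k:ℂ) + (m:ℂ) + α₁ + α₂ + b) ≠ 0 := by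
    intro k m h; exact h8 (-k - m) (by push_cast; linear_combination -h)
  -- move 1 : lower r₁
  have hm1 : ∀ j s₁ s₂ : ℤ, vb j s₁ s₂ ∈ W → vb j (s₁-1) s₂ ∈ W := by
    intro j s₁ s₂ hv
    have h := hW31 _ hv
    rw [Eb31_vb] at h
    exact (W.smul_mem_iff (hK s₁ j)).mp h
  -- move 2 : lower r₂
  have hm2 : ∀ j s₁ s₂ : ℤ, vb j s₁ s₂ ∈ W → vb j s₁ (s₂-1) ∈ W := by
    intro j s₁ s₂ hv
    have h := hW32 _ hv
    rw [Eb32_vb] at h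
    exact (W.smul_mem_iff (hP s₂ j)).mp h
  -- move 3 : raise i
  have hm3 : ∀ j s₁ s₂ : ℤ, vb j s₁ s₂ ∈ W → vb (j+1) s₁ s₂ ∈ W := by
    intro j s₁ s₂ hv
    have hmem : Eb31 α₁ α₂ lam b c (Eb13 α₁ α₂ lam b c (vb j s₁ s₂))
        + ((((s₁:ℂ) + α₁ + s₂ + α₂ + b + lam + j)) * ((s₁:ℂ) + 1 + α₁ - b - lam - j))
          • vb j s₁ s₂ ∈ W :=
      W.add_mem (hW31 _ (hW13 _ hv)) (W.smul_mem _ hv)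
    have heq : Eb31 α₁ α₂ lam b c (Eb13 α₁ α₂ lam b c (vb j s₁ s₂))
        + ((((s₁:ℂ) + α₁ + s₂ + α₂ + b + lam + j)) * ((s₁:ℂ) + 1 + α₁ - b - lam - j))
          • vb j s₁ s₂
        = (-(c + lam + (j:ℂ)) * ((s₁:ℂ) + α₁ - b - lam - j)) • vb (j+1) s₁ s₂ := by
      simp only [Eb13_vb, map_neg, map_add, map_smul, Eb31_vb]
      try simp only [e1, e2]
      push_cast
      module
    rw [heq] at hmem
    refine (W.smul_mem_iff ?_).mp hmem
    exact mul_ne_zero (neg_ne_zero.mpr (hcp j)) (hK s₁ j)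
  -- move 4 : lower i
  have hm4 : ∀ j s₁ s₂ : ℤ, vb j s₁ s₂ ∈ W → vb (j-1) s₁ s₂ ∈ W := by
    intro j s₁ s₂ hv
    have hmem : Eb32 α₁ α₂ lam b c (Eb23 α₁ α₂ lam b c (vb j s₁ s₂))
        + ((((s₁:ℂ) + α₁ + s₂ + α₂ + b - lam - j)) * ((s₂:ℂ) + 1 + α₂ - b + lam + j))
          • vb j s₁ s₂ ∈ W :=
      W.add_mem (hW32 _ (hW23 _ hv)) (W.smul_mem _ hv)
    have heq : Eb32 α₁ α₂ lam b c (Eb23 α₁ α₂ lam b c (vb j s₁ s₂))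
        + ((((s₁:ℂ) + α₁ + s₂ + α₂ + b - lam - j)) * ((s₂:ℂ) + 1 + α₂ - b + lam + j))
          • vb j s₁ s₂
        = (-(c - lam - (j:ℂ)) * ((s₂:ℂ) + α₂ - b + lam + j)) • vb (j-1) s₁ s₂ := by
      simp only [Eb23_vb, map_neg, map_add, map_smul, Eb32_vb]
      try simp only [e1, e2]
      push_cast
      module
    rw [heq] at hmem
    refine (W.smul_mem_iff ?_).mp hmem
    exact mul_ne_zero (neg_ne_zero.mpr (hcm j)) (hP s₂ j)
  -- move 6 : r₁ - 1, r₂ + 1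
  have hm6 : ∀ j s₁ s₂ : ℤ, vb j s₁ s₂ ∈ W → vb j (s₁-1) (s₂+1) ∈ W := by
    intro j s₁ s₂ hv
    have hmem : Eb31 α₁ α₂ lam b c (Eb23 α₁ α₂ lam b c (vb j s₁ s₂))
        + (((s₁:ℂ) + α₁ - b - lam - j) + 1) • Eb21 α₁ α₂ lam b c (vb j s₁ s₂) ∈ W :=
      W.add_mem (hW31 _ (hW23 _ hv)) (W.smul_mem _ (hW21 _ hv))
    have heq : Eb31 α₁ α₂ lam b c (Eb23 α₁ α₂ lam b c (vb j s₁ s₂))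
        + (((s₁:ℂ) + α₁ - b - lam - j) + 1) • Eb21 α₁ α₂ lam b c (vb j s₁ s₂)
        = (-((s₁:ℂ) + α₁ - b - lam - j) * ((s₂:ℂ) + α₂ + 2*b - 1))
          • vb j (s₁-1) (s₂+1) := by
      simp only [Eb23_vb, Eb21_vb, map_neg, map_add, map_smul, Eb31_vb]
      try simp only [e1, e2]
      push_cast
      module
    rw [heq] at hmem
    refine (W.smul_mem_iff ?_).mp hmem
    exact mul_ne_zero (neg_ne_zero.mpr (hK s₁ j)) (hG2 s₂)
  -- move 7 : raise r₁
  have hm7 : ∀ j s₁ s₂ : ℤ, vb j s₁ s₂ ∈ W → vb j (s₁+1) s₂ ∈ W := by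
    intro j s₁ s₂ hv
    have hv' : vb (j-1) s₁ s₂ ∈ W := hm4 j s₁ s₂ hv
    set s : ℂ := (s₁:ℂ) + (s₂:ℂ) + α₁ + α₂ + b with hs
    have hmem : ((s + lam + j - 1) * (c + lam + j))
          • Eb12 α₁ α₂ lam b c (Eb23 α₁ α₂ lam b c (vb j s₁ s₂))
        + (-(c - lam - (j:ℂ)) * ((s₂:ℂ) + α₂ - b + lam + j) * (c + lam + j))
          • Eb13 α₁ α₂ lam b c (vb (j-1) s₁ s₂)
        + (-(s - lam - (j:ℂ)) * (c + lam + (j:ℂ)) * (s + lam + j - 1))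
          • Eb13 α₁ α₂ lam b c (vb j s₁ s₂) ∈ W :=
      W.add_mem (W.add_mem (W.smul_mem _ (hW12 _ (hW23 _ hv)))
        (W.smul_mem _ (hW13 _ hv'))) (W.smul_mem _ (hW13 _ hv))
    have heq : ((s + lam + j - 1) * (c + lam + j))
          • Eb12 α₁ α₂ lam b c (Eb23 α₁ α₂ lam b c (vb j s₁ s₂))
        + (-(c - lam - (j:ℂ)) * ((s₂:ℂ) + α₂ - b + lam + j) * (c + lam + j))
          • Eb13 α₁ α₂ lam b c (vb (j-1) s₁ s₂)
        + (-(s - lam - (j:ℂ)) * (c + lam + (j:ℂ)) * (s + lam + j - 1))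
          • Eb13 α₁ α₂ lam b c (vb j s₁ s₂)
        = (-(c + lam + (j:ℂ)) * ((s₁:ℂ) + α₁ + 2*b - 1) * (c - s) * (c + s - 1))
          • vb j (s₁+1) s₂ := by
      simp only [Eb23_vb, Eb13_vb, map_neg, map_add, map_smul, Eb12_vb]
      try simp only [e1, e2]
      rw [hs]
      push_cast
      module
    rw [heq] at hmem
    refine (W.smul_mem_iff ?_).mp hmem
    refine mul_ne_zero (mul_ne_zero (mul_ne_zero (neg_ne_zero.mpr (hcp j)) (hG1 s₁)) ?_) ?_
    · exact hS2 s₁ s₂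
    · exact hS1 s₁ s₂
  -- move 8 : raise r₂
  have hm8 : ∀ j s₁ s₂ : ℤ, vb j s₁ s₂ ∈ W → vb j s₁ (s₂+1) ∈ W := by
    intro j s₁ s₂ hv
    have := hm6 j (s₁+1) s₂ (hm7 j s₁ s₂ hv)
    rwa [e2] at this
  -- reach every basis vector
  have hall : ∀ j s₁ s₂ : ℤ, vb j s₁ s₂ ∈ W := by
    have step1 : ∀ j : ℤ, vb j r₁ r₂ ∈ W :=
      int_shift (fun j => vb j r₁ r₂ ∈ W) (fun a => hm3 a r₁ r₂) (fun a => hm4 a r₁ r₂) i hv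
    have step2 : ∀ j s₁ : ℤ, vb j s₁ r₂ ∈ W := fun j =>
      int_shift (fun s₁ => vb j s₁ r₂ ∈ W) (fun a => hm7 j a r₂) (fun a => hm1 j a r₂) r₁
        (step1 j)
    exact fun j s₁ =>
      int_shift (fun s₂ => vb j s₁ s₂ ∈ W) (fun a => hm8 j s₁ a) (fun a => hm2 j s₁ a) r₂
        (step2 j s₁)
  -- conclude
  rw [Submodule.eq_top_iff']
  intro x
  induction x using Finsupp.induction with
  | zero => exact W.zero_mem
  | single_add p a f _ _ ih =>
    refine W.add_mem ?_ ih
    have : Finsupp.single p a = a • vb p.1 p.2.1 p.2.2 := by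
      simp [vb, Finsupp.smul_single]
    rw [this]
    exact W.smul_mem a (hall p.1 p.2.1 p.2.2)
end

section
/- In F^α_{2b}(V), the operator identity ((r₂'−b+i''+s)Ē₁₂ + Ē₁₃Ē₃₂) w_i(r₁,r₂) = (r₂'−b+i'')(s+1−2b−r₁') w_i(r₁+1,r₂−1) holds, where w_i(r₁,r₂) = Σ_{j=0}^s a_{ij}(r₁,r₂)v_{i+j}(r₁,r₂), if and only if for j=1,…,s the coefficients satisfy a_{i,j−1}(r₁,r₂) = (r₂'−b+i''+j)·j·(s+2−3b−i''−j) / ((r₁'−b−i''−j+1)(s+1−j)(c+i''+j−1)) · a_{ij}(r₁,r₂), given the shift recursions in r₁ and r₂ hold. -/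
set_option linter.unusedVariables false
private lemma aux_Tvb (α₁ α₂ lam b c W : ℂ) (k r₁ r₂ : ℤ) :
    (W • Eb12 α₁ α₂ lam b c + Eb13 α₁ α₂ lam b c ∘ₗ Eb32 α₁ α₂ lam b c) (vb k r₁ r₂)
    = (((r₂:ℂ) + α₂ - b + lam + k) * (W - ((r₁:ℂ) + α₁ + (r₂:ℂ) - 1 + α₂ + b + lam + k))) •
        vb k (r₁+1) (r₂-1)
      + ((W - ((r₂:ℂ) + α₂ - b + lam + k)) * (c + lam + k)) • vb (k+1) (r₁+1) (r₂-1) := by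
  simp only [LinearMap.add_apply, LinearMap.smul_apply, LinearMap.comp_apply]
  simp only [Eb12, Eb13, Eb32, vb, Finsupp.lsum_single, Finsupp.lsingle_apply,
    map_smul, map_add, map_neg, LinearMap.add_apply,
    LinearMap.smul_apply, LinearMap.neg_apply, smul_eq_mul, mul_one]
  match_scalars <;> ring

private lemma aux_coeff_ext (n : ℕ) (e d : ℕ → ℂ) (i r₁ r₂ : ℤ)
    (h : ∑ j ∈ Finset.range n, e j • vb (i + (j:ℤ)) r₁ r₂
       = ∑ j ∈ Finset.range n, d j • vb (i + (j:ℤ)) r₁ r₂) :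
    ∀ j ∈ Finset.range n, e j = d j := by
  intro j hj
  have := congrArg (fun x : F3 => x (i + (j:ℤ), r₁, r₂)) h
  simpa [vb, Finsupp.finset_sum_apply, Finsupp.single_apply, Prod.ext_iff,
    Finset.sum_ite_eq' (Finset.range n) j, hj] using this

/-- The operator identity ((r₂'−b+i''+s)Ē₁₂ + Ē₁₃Ē₃₂) wᵢ(r₁,r₂)
    = (r₂'−b+i'')(s+1−2b−r₁') wᵢ(r₁+1,r₂−1) holds (for all r₁, r₂) if and only if the
    coefficients satisfy
    a_{i,j−1} = (r₂'−b+i''+j)·j·(s+2−3b−i''−j)/((r₁'−b−i''−j+1)(s+1−j)(c+i''+j−1)) · a_{ij}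
    for j = 1,…,s, given the shift recursions in r₁ and r₂. -/
theorem operator_identity_iff_coefficient_recursion (α₁ α₂ lam b c : ℂ) (i : ℤ)
    (hgen1 : ∀ m : ℤ, α₁ - b - lam ≠ (m : ℂ)) (hgen2 : ∀ m : ℤ, α₂ - b + lam ≠ (m : ℂ))
    (hgen3 : ∀ m : ℤ, c + lam ≠ (m : ℂ))
    (s : ℕ) (hs : 1 ≤ s) (a : ℕ → ℤ → ℤ → ℂ)
    (ha0 : ∀ r₁ r₂ : ℤ, a 0 r₁ r₂ = 1)
    (hrec1 : ∀ j ≤ s, ∀ r₁ r₂ : ℤ, a j (r₁ - 1) r₂ =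
      (((r₁ : ℂ) + α₁ - b - lam - (i : ℂ) - (j : ℂ)) / ((r₁ : ℂ) + α₁ - b - lam - (i : ℂ)))
        * a j r₁ r₂)
    (hrec2 : ∀ j ≤ s, ∀ r₁ r₂ : ℤ, a j r₁ (r₂ - 1) =
      (((r₂ : ℂ) + α₂ - b + lam + (i : ℂ) + (j : ℂ)) / ((r₂ : ℂ) + α₂ - b + lam + (i : ℂ)))
        * a j r₁ r₂) :
    (∀ r₁ r₂ : ℤ,
      (((r₂ : ℂ) + α₂ - b + lam + (i : ℂ) + (s : ℂ)) • Eb12 α₁ α₂ lam b c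
          + Eb13 α₁ α₂ lam b c ∘ₗ Eb32 α₁ α₂ lam b c)
        (∑ j ∈ Finset.range (s + 1), a j r₁ r₂ • vb (i + (j : ℤ)) r₁ r₂)
      = (((r₂ : ℂ) + α₂ - b + lam + (i : ℂ)) * ((s : ℂ) + 1 - 2 * b - ((r₁ : ℂ) + α₁))) •
          (∑ j ∈ Finset.range (s + 1), a j (r₁ + 1) (r₂ - 1) • vb (i + (j : ℤ)) (r₁ + 1) (r₂ - 1)))
    ↔ (∀ j : ℕ, 1 ≤ j → j ≤ s → ∀ r₁ r₂ : ℤ,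
        a (j - 1) r₁ r₂ =
          (((r₂ : ℂ) + α₂ - b + lam + (i : ℂ) + (j : ℂ)) * (j : ℂ)
              * ((s : ℂ) + 2 - 3 * b - lam - (i : ℂ) - (j : ℂ))) /
            ((((r₁ : ℂ) + α₁ - b - lam - (i : ℂ) - (j : ℂ) + 1)) * ((s : ℂ) + 1 - (j : ℂ))
              * (c + lam + (i : ℂ) + (j : ℂ) - 1))
          * a j r₁ r₂) := by
  have nz1 : ∀ m : ℤ, (m:ℂ) + α₁ - b - lam ≠ 0 := by
    intro m h; exact hgen1 (-m) (by push_cast; linear_combination h)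
  have nz2 : ∀ m : ℤ, (m:ℂ) + α₂ - b + lam ≠ 0 := by
    intro m h; exact hgen2 (-m) (by push_cast; linear_combination h)
  have nz3 : ∀ m : ℤ, c + lam + (m:ℂ) ≠ 0 := by
    intro m h; exact hgen3 (-m) (by push_cast; linear_combination h)
  have key : ∀ r₁ r₂ : ℤ,
      ((((r₂ : ℂ) + α₂ - b + lam + (i : ℂ) + (s : ℂ)) • Eb12 α₁ α₂ lam b c
          + Eb13 α₁ α₂ lam b c ∘ₗ Eb32 α₁ α₂ lam b c)
        (∑ j ∈ Finset.range (s + 1), a j r₁ r₂ • vb (i + (j : ℤ)) r₁ r₂)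
      = (((r₂ : ℂ) + α₂ - b + lam + (i : ℂ)) * ((s : ℂ) + 1 - 2 * b - ((r₁ : ℂ) + α₁))) •
          (∑ j ∈ Finset.range (s + 1), a j (r₁ + 1) (r₂ - 1) • vb (i + (j : ℤ)) (r₁ + 1) (r₂ - 1)))
      ↔ (∀ j : ℕ, 1 ≤ j → j ≤ s →
        a (j - 1) r₁ r₂ =
          (((r₂ : ℂ) + α₂ - b + lam + (i : ℂ) + (j : ℂ)) * (j : ℂ)
              * ((s : ℂ) + 2 - 3 * b - lam - (i : ℂ) - (j : ℂ))) /
            ((((r₁ : ℂ) + α₁ - b - lam - (i : ℂ) - (j : ℂ) + 1)) * ((s : ℂ) + 1 - (j : ℂ))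
              * (c + lam + (i : ℂ) + (j : ℂ) - 1))
          * a j r₁ r₂) := by
    intro r₁ r₂
    have nzA : ((r₂:ℂ) + α₂ - b + lam + (i:ℂ)) ≠ 0 := by
      intro h; exact nz2 (r₂ + i) (by push_cast; linear_combination h)
    have nzPj : ∀ j : ℕ, ((r₁:ℂ) + α₁ - b - lam - (i:ℂ) - (j:ℂ) + 1) ≠ 0 := by
      intro j h; exact nz1 (r₁ - i - j + 1) (by push_cast; linear_combination h)
    have nzP0 : ((r₁:ℂ) + α₁ - b - lam - (i:ℂ) + 1) ≠ 0 := by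
      intro h; exact nz1 (r₁ - i + 1) (by push_cast; linear_combination h)
    have nzCj : ∀ j : ℕ, (c + lam + (i:ℂ) + (j:ℂ) - 1) ≠ 0 := by
      intro j h; exact nz3 (i + j - 1) (by push_cast; linear_combination h)
    have nzSj : ∀ j : ℕ, j ≤ s → ((s:ℂ) + 1 - (j:ℂ)) ≠ 0 := by
      intro j hj h
      have h2 : ((s+1:ℕ):ℂ) = ((j:ℕ):ℂ) := by push_cast; linear_combination h
      exact absurd (Nat.cast_inj.mp h2) (by omega)
    have hshift : ∀ j ≤ s, a j (r₁+1) (r₂-1)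
          * (((r₂:ℂ) + α₂ - b + lam + i) * ((r₁:ℂ) + α₁ - b - lam - i - (j:ℂ) + 1))
        = a j r₁ r₂
          * (((r₂:ℂ) + α₂ - b + lam + i + j) * ((r₁:ℂ) + α₁ - b - lam - i + 1)) := by
      intro j hj
      have h1 := hrec1 j hj (r₁+1) r₂
      rw [show r₁+1-1 = r₁ from by ring] at h1
      have h2 := hrec2 j hj (r₁+1) r₂
      rw [h2, h1]
      push_cast
      have d1' : (r₁:ℂ)+1+α₁-b-lam-i-j ≠ 0 := by
        intro h; exact nzPj j (by linear_combination h)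
      have d2' : (r₁:ℂ)+1+α₁-b-lam-i ≠ 0 := by
        intro h; exact nzP0 (by linear_combination h)
      field_simp
      ring
    have hLHS : (((r₂ : ℂ) + α₂ - b + lam + (i : ℂ) + (s : ℂ)) • Eb12 α₁ α₂ lam b c
          + Eb13 α₁ α₂ lam b c ∘ₗ Eb32 α₁ α₂ lam b c)
        (∑ j ∈ Finset.range (s + 1), a j r₁ r₂ • vb (i + (j : ℤ)) r₁ r₂)
        = ∑ j ∈ Finset.range (s + 1),
            (a j r₁ r₂ * ((((r₂:ℂ) + α₂ - b + lam + i) + j)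
                * ((((s:ℂ) + 1 - 2*b - ((r₁:ℂ) + α₁))) - j))
              + (if j = 0 then 0 else a (j-1) r₁ r₂
                  * (((s:ℂ) + 1 - j) * (c + lam + (i:ℂ) + j - 1))))
              • vb (i + (j : ℤ)) (r₁ + 1) (r₂ - 1) := by
      rw [map_sum]
      have step : ∀ j ∈ Finset.range (s+1),
          (((r₂ : ℂ) + α₂ - b + lam + (i : ℂ) + (s : ℂ)) • Eb12 α₁ α₂ lam b c
            + Eb13 α₁ α₂ lam b c ∘ₗ Eb32 α₁ α₂ lam b c) (a j r₁ r₂ • vb (i + (j:ℤ)) r₁ r₂)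
          = (a j r₁ r₂ * ((((r₂:ℂ) + α₂ - b + lam + i) + j)
                * ((((s:ℂ) + 1 - 2*b - ((r₁:ℂ) + α₁))) - j)))
              • vb (i + (j:ℤ)) (r₁+1) (r₂-1)
            + (a j r₁ r₂ * (((s:ℂ) - j) * (c + lam + (i:ℂ) + j)))
              • vb (i + (j:ℤ) + 1) (r₁+1) (r₂-1) := by
        intro j _
        rw [map_smul, aux_Tvb, smul_add, smul_smul, smul_smul]
        congr 2 <;> (push_cast; ring)
      rw [Finset.sum_congr rfl step, Finset.sum_add_distrib]
      have hy : ∑ j ∈ Finset.range (s+1),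
            (a j r₁ r₂ * (((s:ℂ) - j) * (c + lam + (i:ℂ) + j)))
              • vb (i + (j:ℤ) + 1) (r₁+1) (r₂-1)
          = ∑ j ∈ Finset.range (s+1),
            (if j = 0 then 0 else a (j-1) r₁ r₂
                * (((s:ℂ) + 1 - j) * (c + lam + (i:ℂ) + j - 1)))
              • vb (i + (j:ℤ)) (r₁+1) (r₂-1) := by
        conv_rhs => rw [Finset.sum_range_succ']
        rw [Finset.sum_range_succ]
        have hlast : (a s r₁ r₂ * (((s:ℂ) - s) * (c + lam + (i:ℂ) + s)))
            • vb (i + (s:ℤ) + 1) (r₁+1) (r₂-1) = 0 := by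
          rw [show (a s r₁ r₂ * (((s:ℂ) - s) * (c + lam + (i:ℂ) + s))) = 0 from by ring,
            zero_smul]
        rw [hlast, if_pos rfl, zero_smul, add_zero, add_zero]
        refine Finset.sum_congr rfl fun j _ => ?_
        rw [if_neg (Nat.succ_ne_zero j), Nat.add_sub_cancel,
          show (i + ((j+1:ℕ):ℤ)) = i + (j:ℤ) + 1 from by push_cast; ring]
        congr 1
        push_cast; ring
      rw [hy, ← Finset.sum_add_distrib]
      refine Finset.sum_congr rfl fun j _ => ?_
      rw [← add_smul]
    have hRHS : (((r₂ : ℂ) + α₂ - b + lam + (i : ℂ)) * ((s : ℂ) + 1 - 2 * b - ((r₁ : ℂ) + α₁))) •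
          (∑ j ∈ Finset.range (s + 1), a j (r₁ + 1) (r₂ - 1) • vb (i + (j : ℤ)) (r₁ + 1) (r₂ - 1))
        = ∑ j ∈ Finset.range (s + 1),
            ((((r₂:ℂ) + α₂ - b + lam + i) * ((s:ℂ) + 1 - 2*b - ((r₁:ℂ) + α₁)))
                * a j (r₁+1) (r₂-1))
              • vb (i + (j : ℤ)) (r₁ + 1) (r₂ - 1) := by
      rw [Finset.smul_sum]
      exact Finset.sum_congr rfl fun j _ => smul_smul _ _ _
    rw [hLHS, hRHS]
    constructor
    · intro h j h1 h2
      have hedj := aux_coeff_ext (s+1) _ _ i (r₁+1) (r₂-1) h j (Finset.mem_range.mpr (by omega))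
      rw [if_neg (by omega : ¬ j = 0)] at hedj
      have hsh := hshift j h2
      have hT : a (j-1) r₁ r₂ * ((((r₁:ℂ) + α₁ - b - lam - (i:ℂ) - (j:ℂ) + 1))
              * ((s:ℂ) + 1 - (j:ℂ)) * (c + lam + (i:ℂ) + (j:ℂ) - 1))
              * (((r₂:ℂ) + α₂ - b + lam + (i:ℂ)))
          = ((((r₂:ℂ) + α₂ - b + lam + (i:ℂ) + (j:ℂ)) * (j:ℂ)
              * ((s:ℂ) + 2 - 3 * b - lam - (i:ℂ) - (j:ℂ))) * a j r₁ r₂)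
              * (((r₂:ℂ) + α₂ - b + lam + (i:ℂ))) := by
        linear_combination (((r₂:ℂ) + α₂ - b + lam + i)
            * ((r₁:ℂ) + α₁ - b - lam - i - (j:ℂ) + 1)) * hedj
          + (((r₂:ℂ) + α₂ - b + lam + i) * ((s:ℂ) + 1 - 2*b - ((r₁:ℂ) + α₁))) * hsh
      rw [div_mul_eq_mul_div, eq_div_iff
        (mul_ne_zero (mul_ne_zero (nzPj j) (nzSj j h2)) (nzCj j))]
      exact mul_right_cancel₀ nzA hT
    · intro h
      refine Finset.sum_congr rfl fun j hj => ?_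
      congr 1
      by_cases hj0 : j = 0
      · subst hj0
        rw [if_pos rfl, ha0, ha0]
        push_cast; ring
      · have h1 : 1 ≤ j := by omega
        have h2 : j ≤ s := by have := Finset.mem_range.mp hj; omega
        rw [if_neg hj0]
        have hR := h j h1 h2
        have hR' : a (j-1) r₁ r₂ * ((((r₁:ℂ) + α₁ - b - lam - (i:ℂ) - (j:ℂ) + 1))
              * ((s:ℂ) + 1 - (j:ℂ)) * (c + lam + (i:ℂ) + (j:ℂ) - 1))
            = (((r₂:ℂ) + α₂ - b + lam + (i:ℂ) + (j:ℂ)) * (j:ℂ)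
              * ((s:ℂ) + 2 - 3 * b - lam - (i:ℂ) - (j:ℂ))) * a j r₁ r₂ := by
          rw [hR, div_mul_eq_mul_div, div_mul_eq_mul_div, div_eq_iff
            (mul_ne_zero (mul_ne_zero (nzPj j) (nzSj j h2)) (nzCj j))]
          try ring
        have hsh := hshift j h2
        have hgoal' : (a j r₁ r₂ * ((((r₂:ℂ) + α₂ - b + lam + i) + j)
                * ((((s:ℂ) + 1 - 2*b - ((r₁:ℂ) + α₁))) - j))
              + a (j-1) r₁ r₂ * (((s:ℂ) + 1 - j) * (c + lam + (i:ℂ) + j - 1)))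
              * ((((r₂:ℂ) + α₂ - b + lam + (i:ℂ)))
                * ((r₁:ℂ) + α₁ - b - lam - (i:ℂ) - (j:ℂ) + 1))
            = ((((r₂:ℂ) + α₂ - b + lam + i) * ((s:ℂ) + 1 - 2*b - ((r₁:ℂ) + α₁)))
                * a j (r₁+1) (r₂-1))
              * ((((r₂:ℂ) + α₂ - b + lam + (i:ℂ)))
                * ((r₁:ℂ) + α₁ - b - lam - (i:ℂ) - (j:ℂ) + 1)) := by
          linear_combination (((r₂:ℂ) + α₂ - b + lam + i)) * hR'
            - (((r₂:ℂ) + α₂ - b + lam + i) * ((s:ℂ) + 1 - 2*b - ((r₁:ℂ) + α₁))) * hsh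
        exact mul_right_cancel₀ (mul_ne_zero nzA (nzPj j)) hgoal'
  exact ⟨fun h j h1 h2 r₁ r₂ => (key r₁ r₂).1 (h r₁ r₂) j h1 h2,
    fun h r₁ r₂ => (key r₁ r₂).2 fun j h1 h2 => h j h1 h2 r₁ r₂⟩
end

section
/- In the sl₃-module F^α_{2b}(V) with generic parameters (all of c±λ, α₁−b−λ, α₂−b+λ, α₁+2b, α₂+2b, α₁+α₂+b±c, c±3b not integers), none of the operators Ē₁₂Ē₂₁, Ē₂₃Ē₃₂, Ē₁₃Ē₃₁ has an eigenvector; in particular, for any nonzero v = Σ finite c_i v_i(r₁,r₂) in a fixed weight space, Ē₁₂Ē₂₁ v is not a scalar multiple of v. -/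
set_option linter.unusedVariables false
private lemma no_eig_gen (T : F3 →ₗ[ℂ] F3) (ht : ℤ×ℤ×ℤ → ℤ) (σ : ℤ×ℤ×ℤ → ℤ×ℤ×ℤ)
    (hσ : Function.Injective σ)
    (hh : ∀ p, ht (σ p) = ht p + 1)
    (coef : ℤ×ℤ×ℤ → ℂ) (hcoef : ∀ p, coef p ≠ 0)
    (hT1 : ∀ p a, T (Finsupp.single p a) (σ p) = coef p * a)
    (hT2 : ∀ p a q, T (Finsupp.single p a) q ≠ 0 →
        ht q ≤ ht p + 1 ∧ (ht q = ht p + 1 → q = σ p)) :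
    ¬ ∃ x : F3, x ≠ 0 ∧ ∃ μ : ℂ, T x = μ • x := by
  rintro ⟨x, hx, μ, hμ⟩
  have hsupp : x.support.Nonempty := Finsupp.support_nonempty_iff.mpr hx
  have hSne : (x.support.image ht).Nonempty := hsupp.image ht
  set i₀ := (x.support.image ht).max' hSne with hi₀
  obtain ⟨p, hp, hpi⟩ := Finset.mem_image.mp ((x.support.image ht).max'_mem hSne)
  have hmax : ∀ q ∈ x.support, ht q ≤ i₀ :=
    fun q hq => Finset.le_max' _ _ (Finset.mem_image_of_mem ht hq)
  have hx0 : x (σ p) = 0 := by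
    by_contra h
    have := hmax (σ p) (Finsupp.mem_support_iff.mpr h)
    rw [hh, hpi] at this; omega
  have hTx : T x (σ p) = coef p * x p := by
    conv_lhs => rw [← Finsupp.sum_single x]
    rw [Finsupp.sum, map_sum, Finsupp.finset_sum_apply]
    rw [Finset.sum_eq_single p]
    · exact hT1 p (x p)
    · intro q hq hne
      by_contra h
      obtain ⟨h1, h2⟩ := hT2 q (x q) (σ p) h
      have hq' := hmax q hq
      have heq : ht q = i₀ := by rw [hh, hpi] at h1; omega
      have := h2 (by rw [hh, hpi]; omega)
      exact hne (hσ this.symm)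
    · intro h; rw [Finsupp.notMem_support_iff.mp h]; simp
  rw [hμ] at hTx
  have hxp : x p ≠ 0 := Finsupp.mem_support_iff.mp hp
  have hz : (μ • x) (σ p) = 0 := by simp [hx0]
  rw [hz] at hTx
  exact mul_ne_zero (hcoef p) hxp hTx.symm

private lemma comp12_single (α₁ α₂ lam b c : ℂ) (i r₁ r₂ : ℤ) (a : ℂ) :
    (Eb12 α₁ α₂ lam b c ∘ₗ Eb21 α₁ α₂ lam b c) (Finsupp.single (i,r₁,r₂) a)
      = ((c - lam - i) * (lam + i - 1 - b + (r₂+1) + α₂)) • Finsupp.single (i-1, r₁, r₂) a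
        + (((c - lam - i) * (c + lam + i - 1))
            + (-(lam + i) - b + r₁ + α₁) * (lam + i - b + (r₂+1) + α₂)) • Finsupp.single (i, r₁, r₂) a
        + ((-(lam + i) - b + r₁ + α₁) * (c + lam + i)) • Finsupp.single (i+1, r₁, r₂) a := by
  simp only [LinearMap.comp_apply, Eb12, Eb21, Finsupp.lsum_single, LinearMap.add_apply,
    LinearMap.smul_apply, Finsupp.lsingle_apply, map_add, map_smul, sub_add_cancel,
    add_sub_cancel_right, smul_smul, smul_add, add_smul]
  push_cast
  module

private lemma comp23_single (α₁ α₂ lam b c : ℂ) (i r₁ r₂ : ℤ) (a : ℂ) :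
    (Eb23 α₁ α₂ lam b c ∘ₗ Eb32 α₁ α₂ lam b c) (Finsupp.single (i,r₁,r₂) a)
      = (-((r₂ + α₂ - b + lam + i) * (c - lam - i))) • Finsupp.single (i-1, r₁, r₂) a
        + (-((r₂ + α₂ - b + lam + i) * (r₁ + α₁ + (r₂-1) + α₂ + b - lam - i))) • Finsupp.single (i, r₁, r₂) a := by
  simp only [LinearMap.comp_apply, Eb23, Eb32, Finsupp.lsum_single, LinearMap.add_apply,
    LinearMap.smul_apply, LinearMap.neg_apply, Finsupp.lsingle_apply, map_add, map_smul,
    sub_add_cancel, add_sub_cancel_right, map_neg, smul_smul, smul_add, smul_neg, neg_smul]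
  push_cast
  module

private lemma comp13_single (α₁ α₂ lam b c : ℂ) (i r₁ r₂ : ℤ) (a : ℂ) :
    (Eb13 α₁ α₂ lam b c ∘ₗ Eb31 α₁ α₂ lam b c) (Finsupp.single (i,r₁,r₂) a)
      = (-((r₁ + α₁ - b - lam - i) * ((r₁-1) + α₁ + r₂ + α₂ + b + lam + i))) • Finsupp.single (i, r₁, r₂) a
        + (-((r₁ + α₁ - b - lam - i) * (c + lam + i))) • Finsupp.single (i+1, r₁, r₂) a := by
  simp only [LinearMap.comp_apply, Eb13, Eb31, Finsupp.lsum_single, LinearMap.add_apply,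
    LinearMap.smul_apply, LinearMap.neg_apply, Finsupp.lsingle_apply, map_add, map_smul,
    sub_add_cancel, add_sub_cancel_right, map_neg, smul_smul, smul_add, smul_neg, neg_smul]
  push_cast
  module

/-- With generic parameters, none of the operators Ē₁₂Ē₂₁, Ē₂₃Ē₃₂, Ē₁₃Ē₃₁ has an
    eigenvector in F^α_{2b}(V). -/
theorem no_eigenvectors (α₁ α₂ lam b c : ℂ)
    (h1 : ∀ m : ℤ, c + lam ≠ (m : ℂ)) (h2 : ∀ m : ℤ, c - lam ≠ (m : ℂ))
    (h3 : ∀ m : ℤ, α₁ - b - lam ≠ (m : ℂ)) (h4 : ∀ m : ℤ, α₂ - b + lam ≠ (m : ℂ))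
    (h5 : ∀ m : ℤ, α₁ + 2 * b ≠ (m : ℂ)) (h6 : ∀ m : ℤ, α₂ + 2 * b ≠ (m : ℂ))
    (h7 : ∀ m : ℤ, α₁ + α₂ + b + c ≠ (m : ℂ)) (h8 : ∀ m : ℤ, α₁ + α₂ + b - c ≠ (m : ℂ))
    (h9 : ∀ m : ℤ, c + 3 * b ≠ (m : ℂ)) (h10 : ∀ m : ℤ, c - 3 * b ≠ (m : ℂ)) :
    (¬ ∃ x : F3, x ≠ 0 ∧ ∃ μ : ℂ,
        (Eb12 α₁ α₂ lam b c ∘ₗ Eb21 α₁ α₂ lam b c) x = μ • x)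
    ∧ (¬ ∃ x : F3, x ≠ 0 ∧ ∃ μ : ℂ,
        (Eb23 α₁ α₂ lam b c ∘ₗ Eb32 α₁ α₂ lam b c) x = μ • x)
    ∧ (¬ ∃ x : F3, x ≠ 0 ∧ ∃ μ : ℂ,
        (Eb13 α₁ α₂ lam b c ∘ₗ Eb31 α₁ α₂ lam b c) x = μ • x) := by
  refine ⟨?_, ?_, ?_⟩
  · refine no_eig_gen _ (fun p => p.1) (fun p => (p.1 + 1, p.2.1, p.2.2))
      (by rintro ⟨i, r, t⟩ ⟨j, u, v⟩ h; simp only [Prod.mk.injEq] at h ⊢; omega)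
      (fun p => rfl)
      (fun p => (-(lam + p.1) - b + p.2.1 + α₁) * (c + lam + p.1))
      (fun p => mul_ne_zero
        (fun h => h3 (p.1 - p.2.1) (by push_cast; linear_combination h))
        (fun h => h1 (-p.1) (by push_cast; linear_combination h)))
      ?_ ?_
    · rintro ⟨i, r₁, r₂⟩ a
      rw [comp12_single]
      simp [Finsupp.single_apply, Prod.ext_iff, show ¬ i - 1 = i + 1 by omega,
        show ¬ i = i + 1 by omega]
    · rintro ⟨i, r₁, r₂⟩ a ⟨j, s₁, s₂⟩ hq
      rw [comp12_single] at hq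
      simp only [Finsupp.add_apply, Finsupp.smul_apply, Finsupp.single_apply, smul_eq_mul] at hq
      split_ifs at hq <;> simp_all [Prod.mk.injEq] <;> omega
  · refine no_eig_gen _ (fun p => -p.1) (fun p => (p.1 - 1, p.2.1, p.2.2))
      (by rintro ⟨i, r, t⟩ ⟨j, u, v⟩ h; simp only [Prod.mk.injEq] at h ⊢; omega)
      (fun p => by dsimp; omega)
      (fun p => -((p.2.2 + α₂ - b + lam + p.1) * (c - lam - p.1)))
      (fun p => neg_ne_zero.mpr (mul_ne_zero
        (fun h => h4 (-(p.2.2 + p.1)) (by push_cast; linear_combination h))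
        (fun h => h2 p.1 (by push_cast; linear_combination h))))
      ?_ ?_
    · rintro ⟨i, r₁, r₂⟩ a
      rw [comp23_single]
      simp [Finsupp.single_apply, Prod.ext_iff, show ¬ i = i - 1 by omega]
    · rintro ⟨i, r₁, r₂⟩ a ⟨j, s₁, s₂⟩ hq
      rw [comp23_single] at hq
      simp only [Finsupp.add_apply, Finsupp.smul_apply, Finsupp.single_apply, smul_eq_mul] at hq
      split_ifs at hq <;> simp_all [Prod.mk.injEq] <;> omega
  · refine no_eig_gen _ (fun p => p.1) (fun p => (p.1 + 1, p.2.1, p.2.2))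
      (by rintro ⟨i, r, t⟩ ⟨j, u, v⟩ h; simp only [Prod.mk.injEq] at h ⊢; omega)
      (fun p => rfl)
      (fun p => -((p.2.1 + α₁ - b - lam - p.1) * (c + lam + p.1)))
      (fun p => neg_ne_zero.mpr (mul_ne_zero
        (fun h => h3 (p.1 - p.2.1) (by push_cast; linear_combination h))
        (fun h => h1 (-p.1) (by push_cast; linear_combination h))))
      ?_ ?_
    · rintro ⟨i, r₁, r₂⟩ a
      rw [comp13_single]
      simp [Finsupp.single_apply, Prod.ext_iff, show ¬ i = i + 1 by omega]
    · rintro ⟨i, r₁, r₂⟩ a ⟨j, s₁, s₂⟩ hq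
      rw [comp13_single] at hq
      simp only [Finsupp.add_apply, Finsupp.smul_apply, Finsupp.single_apply, smul_eq_mul] at hq
      split_ifs at hq <;> simp_all [Prod.mk.injEq] <;> omega
end
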